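/- For every integer m ≥ 0 and every real s, the m-th derivative of the complex function t ↦ (t + e^{πi/6} + s)^{2m} / (t + i)^{m+1} evaluated at t = 0 equals −i · ((2m)!/m!) · (1 + √3·s + s²)^m. In particular its real part is zero. -/

import Mathlib

open Complex Finset

-- key derivative lemma
lemma key_sum_deriv (N : ℕ) (a : ℕ → ℂ) (e : ℕ → ℤ) : ∀ (n : ℕ) (x : ℂ), x + Complex.I ≠ 0 →
    iteratedDeriv n (fun t : ℂ => ∑ j ∈ Finset.range N, a j * (t + Complex.I) ^ (e j)) x
      = ∑ j ∈ Finset.range N,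
          a j * (∏ i ∈ Finset.range n, ((e j : ℂ) - (i : ℂ))) * (x + Complex.I) ^ (e j - n) := by
  intro n
  induction n with
  | zero => intro x hx; simp
  | succ n ih =>
    intro x hx
    rw [iteratedDeriv_succ]
    have hopen : IsOpen {y : ℂ | y + Complex.I ≠ 0} :=
      isOpen_compl_singleton.preimage (by continuity)
    have hev : iteratedDeriv n (fun t : ℂ => ∑ j ∈ Finset.range N, a j * (t + Complex.I) ^ (e j))
        =ᶠ[nhds x] fun y => ∑ j ∈ Finset.range N,
          a j * (∏ i ∈ Finset.range n, ((e j : ℂ) - (i : ℂ))) * (y + Complex.I) ^ (e j - n) := by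
      filter_upwards [hopen.mem_nhds hx] with y hy using ih y hy
    rw [hev.deriv_eq]
    have hd : HasDerivAt (fun y : ℂ => ∑ j ∈ Finset.range N,
        a j * (∏ i ∈ Finset.range n, ((e j : ℂ) - (i : ℂ))) * (y + Complex.I) ^ (e j - n))
        (∑ j ∈ Finset.range N,
          a j * (∏ i ∈ Finset.range n, ((e j : ℂ) - (i : ℂ)))
            * ((e j - n : ℤ) * (x + Complex.I) ^ (e j - n - 1))) x := by
      apply HasDerivAt.fun_sum
      intro j _
      have h1 : HasDerivAt (fun y : ℂ => y + Complex.I) 1 x := (hasDerivAt_id x).add_const _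
      have h2 := (hasDerivAt_zpow (e j - n) (x + Complex.I) (Or.inl hx)).comp x h1
      simpa [Function.comp] using h2.const_mul (a j * (∏ i ∈ Finset.range n, ((e j : ℂ) - (i : ℂ))))
    rw [hd.deriv]
    refine Finset.sum_congr rfl fun j _ => ?_
    rw [Finset.prod_range_succ]
    have : e j - n - 1 = e j - (n + 1 : ℕ) := by push_cast; ring
    rw [this]
    push_cast
    ring

lemma fact_prod (a : ℕ) : ∀ n : ℕ, a.factorial * ∏ i ∈ Finset.range n, (a + 1 + i) = (a + n).factorial := by
  intro n
  induction n with
  | zero => simp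
  | succ n ih =>
    rw [Finset.prod_range_succ, ← mul_assoc, ih]
    have : (a + (n+1)).factorial = (a + n).factorial * (a + n + 1) := by
      rw [show a + (n+1) = (a+n)+1 by ring, Nat.factorial_succ]; ring
    rw [this]; ring

-- product in ℂ
lemma prod_desc (m j : ℕ) (hj : j ≤ m) :
    (∏ i ∈ Finset.range m, ((((j : ℤ) - (m + 1) : ℤ) : ℂ) - (i : ℂ)))
      = (-1) ^ m * ((2 * m - j).factorial : ℂ) / ((m - j).factorial : ℂ) := by
  have hstep : ∀ i ∈ Finset.range m, ((((j : ℤ) - (m + 1) : ℤ) : ℂ) - (i : ℂ))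
      = -(((m - j + 1 + i : ℕ) : ℂ)) := by
    intro i _
    have h1 : (m - j : ℕ) = ((m : ℤ) - j).toNat := by omega
    push_cast [Nat.cast_sub hj]
    ring
  rw [Finset.prod_congr rfl hstep]
  have hneg : (∏ i ∈ Finset.range m, -(((m - j + 1 + i : ℕ) : ℂ)))
      = (-1) ^ m * ∏ i ∈ Finset.range m, (((m - j + 1 + i : ℕ) : ℂ)) := by
    calc (∏ i ∈ Finset.range m, -(((m - j + 1 + i : ℕ) : ℂ)))
        = ∏ i ∈ Finset.range m, ((-1 : ℂ) * (((m - j + 1 + i : ℕ) : ℂ))) :=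
          Finset.prod_congr rfl fun i _ => by ring
      _ = (∏ _i ∈ Finset.range m, (-1 : ℂ)) * ∏ i ∈ Finset.range m, (((m - j + 1 + i : ℕ) : ℂ)) :=
          Finset.prod_mul_distrib
      _ = (-1) ^ m * ∏ i ∈ Finset.range m, (((m - j + 1 + i : ℕ) : ℂ)) := by simp
  rw [hneg]
  have h2 := fact_prod (m - j) m
  have h3 : m - j + m = 2 * m - j := by omega
  rw [h3] at h2
  have h4 : ((m - j).factorial : ℂ) ≠ 0 := Nat.cast_ne_zero.mpr (Nat.factorial_ne_zero _)
  have h5 : (∏ i ∈ Finset.range m, (((m - j + 1 + i : ℕ) : ℂ)))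
      = ((2 * m - j).factorial : ℂ) / ((m - j).factorial : ℂ) := by
    rw [eq_div_iff h4, ← Nat.cast_prod, ← Nat.cast_mul]
    exact_mod_cast (by rw [mul_comm]; exact h2)
  rw [h5, mul_div_assoc]

lemma exp_pi_six : Complex.exp (Real.pi * Complex.I / 6) = ((Real.sqrt 3 : ℝ) + Complex.I) / 2 := by
  have h : ((Real.pi : ℂ) * Complex.I / 6) = ((Real.pi / 6 : ℝ) : ℂ) * Complex.I := by
    push_cast; ring
  rw [h, Complex.exp_mul_I, ← Complex.ofReal_cos, ← Complex.ofReal_sin,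
    Real.cos_pi_div_six, Real.sin_pi_div_six]
  push_cast; ring

lemma choose_fact_identity (m j : ℕ) (hj : j ≤ m) :
    ((2 * m).choose j : ℂ) * ((2 * m - j).factorial : ℂ) / ((m - j).factorial : ℂ)
      = ((2 * m).factorial : ℂ) / (m.factorial : ℂ) * (m.choose j : ℂ) := by
  have hA := Nat.choose_mul_factorial_mul_factorial (show j ≤ 2 * m by omega)
  have hB := Nat.choose_mul_factorial_mul_factorial hj
  have hN : (2 * m).choose j * (2 * m - j).factorial * m.factorial
      = (2 * m).factorial * m.choose j * (m - j).factorial := by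
    rw [← hB, ← hA]; ring
  have hN' := congrArg (Nat.cast : ℕ → ℂ) hN
  push_cast at hN'
  have h4 : ((m - j).factorial : ℂ) ≠ 0 := Nat.cast_ne_zero.mpr (Nat.factorial_ne_zero _)
  have h5 : (m.factorial : ℂ) ≠ 0 := Nat.cast_ne_zero.mpr (Nat.factorial_ne_zero _)
  field_simp
  linear_combination hN'

theorem airy_generating_derivative_value (m : ℕ) (s : ℝ) :
    iteratedDeriv m
        (fun t : ℂ => (t + Complex.exp (Real.pi * Complex.I / 6) + (s : ℂ)) ^ (2 * m) /
          (t + Complex.I) ^ (m + 1)) 0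
      = -Complex.I * ((Nat.factorial (2 * m) : ℂ) / (Nat.factorial m : ℂ)) *
          ((1 : ℂ) + (Real.sqrt 3 : ℝ) * (s : ℂ) + (s : ℂ) ^ 2) ^ m ∧
    (iteratedDeriv m
        (fun t : ℂ => (t + Complex.exp (Real.pi * Complex.I / 6) + (s : ℂ)) ^ (2 * m) /
          (t + Complex.I) ^ (m + 1)) 0).re = 0 := by
  set c : ℂ := Complex.exp (Real.pi * Complex.I / 6) + (s : ℂ) with hcdef
  set d : ℂ := c - Complex.I with hddef
  set a : ℕ → ℂ := fun j => ((2 * m).choose j : ℂ) * d ^ (2 * m - j) with hadef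
  set e : ℕ → ℤ := fun j => (j : ℤ) - (m + 1) with hedef
  have hopen : IsOpen {y : ℂ | y + Complex.I ≠ 0} :=
    isOpen_compl_singleton.preimage (by continuity)
  have h0 : (0 : ℂ) + Complex.I ≠ 0 := by simp [Complex.I_ne_zero]
  -- Step 1: rewrite the function as a sum of zpowers near 0
  have hfun : ∀ t : ℂ, t + Complex.I ≠ 0 →
      (t + Complex.exp (Real.pi * Complex.I / 6) + (s : ℂ)) ^ (2 * m) / (t + Complex.I) ^ (m + 1)
        = ∑ j ∈ Finset.range (2 * m + 1), a j * (t + Complex.I) ^ (e j) := by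
    intro t ht
    have h1 : t + Complex.exp (Real.pi * Complex.I / 6) + (s : ℂ) = (t + Complex.I) + d := by
      rw [hddef, hcdef]; ring
    have hz : ∀ j : ℕ, (t + Complex.I) ^ j / (t + Complex.I) ^ (m + 1)
        = (t + Complex.I) ^ ((j : ℤ) - (m + 1)) := by
      intro j
      rw [← zpow_natCast (t + Complex.I) j, ← zpow_natCast (t + Complex.I) (m + 1),
        ← zpow_sub₀ ht]
      push_cast; ring_nf
    rw [h1, add_pow, Finset.sum_div]
    refine Finset.sum_congr rfl fun j _ => ?_
    rw [show (t + Complex.I) ^ j * d ^ (2 * m - j) * ((2 * m).choose j : ℂ) / (t + Complex.I) ^ (m + 1)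
      = (((2 * m).choose j : ℂ) * d ^ (2 * m - j)) * ((t + Complex.I) ^ j / (t + Complex.I) ^ (m + 1)) by ring,
      hz j]
  -- Step 2: replace the function by the sum near 0 and apply the key lemma
  have hev : (fun t : ℂ => (t + Complex.exp (Real.pi * Complex.I / 6) + (s : ℂ)) ^ (2 * m) /
        (t + Complex.I) ^ (m + 1))
      =ᶠ[nhds (0 : ℂ)] fun t => ∑ j ∈ Finset.range (2 * m + 1), a j * (t + Complex.I) ^ (e j) := by
    filter_upwards [hopen.mem_nhds h0] with y hy using hfun y hy
  have hmain : iteratedDeriv m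
      (fun t : ℂ => (t + Complex.exp (Real.pi * Complex.I / 6) + (s : ℂ)) ^ (2 * m) /
        (t + Complex.I) ^ (m + 1)) 0
      = ∑ j ∈ Finset.range (2 * m + 1),
          a j * (∏ i ∈ Finset.range m, ((e j : ℂ) - (i : ℂ))) * ((0 : ℂ) + Complex.I) ^ (e j - m) := by
    rw [hev.iteratedDeriv_eq m, key_sum_deriv (2 * m + 1) a e m 0 h0]
  -- Step 3: terms with m+1 ≤ j vanish
  have hsub : Finset.range (m + 1) ⊆ Finset.range (2 * m + 1) :=
    Finset.range_subset_range.mpr (by omega)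
  have hvan : ∀ j ∈ Finset.range (2 * m + 1), j ∉ Finset.range (m + 1) →
      a j * (∏ i ∈ Finset.range m, ((e j : ℂ) - (i : ℂ))) * ((0 : ℂ) + Complex.I) ^ (e j - m) = 0 := by
    intro j hj hj'
    have hj1 : m + 1 ≤ j := by simpa using hj'
    have hj2 : j < 2 * m + 1 := by simpa using hj
    have : (∏ i ∈ Finset.range m, ((e j : ℂ) - (i : ℂ))) = 0 := by
      apply Finset.prod_eq_zero (Finset.mem_range.mpr (show j - (m + 1) < m by omega))
      rw [hedef]
      push_cast [Nat.cast_sub hj1]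
      ring
    rw [this]; ring
  rw [← Finset.sum_subset hsub hvan] at hmain
  -- Step 4: evaluate each remaining term
  have hterm : ∀ j ∈ Finset.range (m + 1),
      a j * (∏ i ∈ Finset.range m, ((e j : ℂ) - (i : ℂ))) * ((0 : ℂ) + Complex.I) ^ (e j - m)
        = -Complex.I * (((2 * m).factorial : ℂ) / (m.factorial : ℂ))
            * ((m.choose j : ℂ) * d ^ (2 * m - j) * Complex.I ^ j) := by
    intro j hj
    have hjm : j ≤ m := by simpa [Nat.lt_succ_iff] using hj
    have hP : (∏ i ∈ Finset.range m, ((e j : ℂ) - (i : ℂ)))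
        = (-1) ^ m * ((2 * m - j).factorial : ℂ) / ((m - j).factorial : ℂ) := by
      rw [hedef]; exact prod_desc m j hjm
    have hIe : ((0 : ℂ) + Complex.I) ^ (e j - m)
        = (-1) ^ m * (-Complex.I) * Complex.I ^ j := by
      rw [zero_add, hedef]
      have hexp : (j : ℤ) - (m + 1) - m = (j : ℤ) - (2 * m + 1 : ℕ) := by push_cast; ring
      rw [hexp, zpow_sub₀ Complex.I_ne_zero, zpow_natCast, zpow_natCast]
      have h21 : Complex.I ^ (2 * m + 1) = (-1) ^ m * Complex.I := by
        rw [pow_succ, pow_mul, Complex.I_sq]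
      rw [h21, div_eq_mul_inv, mul_inv, Complex.inv_I]
      have : ((-1 : ℂ) ^ m)⁻¹ = (-1) ^ m := by
        rw [← inv_pow, inv_neg, inv_one]
      rw [this]; ring
    rw [hP, hIe, hadef]
    have := choose_fact_identity m j hjm
    calc ((2 * m).choose j : ℂ) * d ^ (2 * m - j)
          * ((-1) ^ m * ((2 * m - j).factorial : ℂ) / ((m - j).factorial : ℂ))
          * ((-1) ^ m * (-Complex.I) * Complex.I ^ j)
        = (((2 * m).choose j : ℂ) * ((2 * m - j).factorial : ℂ) / ((m - j).factorial : ℂ))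
            * (((-1 : ℂ) ^ m * (-1) ^ m) * (-Complex.I) * (d ^ (2 * m - j) * Complex.I ^ j)) := by
          ring
      _ = -Complex.I * (((2 * m).factorial : ℂ) / (m.factorial : ℂ))
            * ((m.choose j : ℂ) * d ^ (2 * m - j) * Complex.I ^ j) := by
          rw [this, ← pow_add, ← two_mul, pow_mul]
          norm_num
          ring
  rw [Finset.sum_congr rfl hterm, ← Finset.mul_sum] at hmain
  -- Step 5: sum the binomial series
  have hS : (∑ j ∈ Finset.range (m + 1), (m.choose j : ℂ) * d ^ (2 * m - j) * Complex.I ^ j)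
      = d ^ m * c ^ m := by
    have hcd : c = Complex.I + d := by rw [hddef]; ring
    rw [hcd, add_pow, Finset.mul_sum]
    refine Finset.sum_congr rfl fun j hj => ?_
    have hjm : j ≤ m := by simpa [Nat.lt_succ_iff] using hj
    rw [show 2 * m - j = m + (m - j) by omega, pow_add]
    ring
  rw [hS] at hmain
  -- Step 6: identify the base
  have hbase : (1 : ℂ) + (Real.sqrt 3 : ℝ) * (s : ℂ) + (s : ℂ) ^ 2 = d * c := by
    rw [hddef, hcdef, exp_pi_six]
    have h3 : ((Real.sqrt 3 : ℝ) : ℂ) ^ 2 = 3 := by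
      rw [← Complex.ofReal_pow, Real.sq_sqrt (by norm_num : (3:ℝ) ≥ 0)]
      norm_num
    linear_combination (-1/4 : ℂ) * h3 + (1/4 : ℂ) * Complex.I_sq
  constructor
  · rw [hmain, hbase, mul_pow]
  · rw [hmain]
    have hb2 : d * c = (((1 + Real.sqrt 3 * s + s ^ 2 : ℝ) : ℂ)) := by
      rw [← hbase]; push_cast; ring
    rw [show d ^ m * c ^ m = (d * c) ^ m from (mul_pow d c m).symm, hb2]
    have : -Complex.I * (((2 * m).factorial : ℂ) / (m.factorial : ℂ))
        * (((1 + Real.sqrt 3 * s + s ^ 2 : ℝ) : ℂ)) ^ m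
        = ((((2 * m).factorial : ℝ) / (m.factorial : ℝ)
            * (1 + Real.sqrt 3 * s + s ^ 2) ^ m : ℝ) : ℂ) * (-Complex.I) := by
      push_cast; ring
    rw [this, Complex.mul_re, Complex.ofReal_re, Complex.ofReal_im]
    simp
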